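/- Let H, ρ, F be as in the twist map setting, and assume additionally that all second partial derivatives of H are bounded in absolute value by some M > 0. Let u : ℝ → ℝ be C¹ with u(x + 1) = u(x), let c ∈ ℝ, and suppose the graph {(x, c + u'(x)) : x ∈ ℝ} is invariant under F (F maps it bijectively onto itself). Define T_c u(x) := inf_{y ∈ ℝ} ( u(y) + H(y, x) - c(x - y) ). Then there exists α ∈ ℝ such that T_c u(x) = u(x) - α for all x ∈ ℝ; i.e., u is a weak KAM solution. -/

import Mathlib

open Real

/-- Partial derivative of `H` in the first variable. -/
noncomputable def D1 (H : ℝ → ℝ → ℝ) (x x' : ℝ) : ℝ := deriv (fun t => H t x') x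

/-- Partial derivative of `H` in the second variable. -/
noncomputable def D2 (H : ℝ → ℝ → ℝ) (x x' : ℝ) : ℝ := deriv (fun t => H x t) x'

/-- Mixed second partial derivative `∂₁₂H`. -/
noncomputable def D12 (H : ℝ → ℝ → ℝ) (x x' : ℝ) : ℝ := deriv (fun t => D1 H x t) x'

/-- Second partial derivative `∂₁₁H`. -/
noncomputable def D11 (H : ℝ → ℝ → ℝ) (x x' : ℝ) : ℝ := deriv (fun t => D1 H t x') x

/-- Mixed second partial derivative `∂₂₁H`. -/
noncomputable def D21 (H : ℝ → ℝ → ℝ) (x x' : ℝ) : ℝ := deriv (fun t => D2 H t x') x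

/-- Second partial derivative `∂₂₂H`. -/
noncomputable def D22 (H : ℝ → ℝ → ℝ) (x x' : ℝ) : ℝ := deriv (fun t => D2 H x t) x'

section Aux
variable {H : ℝ → ℝ → ℝ}

lemma fderiv1 (hH : ContDiff ℝ 2 (Function.uncurry H)) (x x' : ℝ) :
    HasDerivAt (fun t => H t x') (fderiv ℝ (Function.uncurry H) (x, x') (1, 0)) x := by
  have h1 : HasFDerivAt (Function.uncurry H) (fderiv ℝ (Function.uncurry H) (x, x')) (x, x') :=
    ((hH.differentiable (by norm_num)) (x, x')).hasFDerivAt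
  have h2 : HasDerivAt (fun t : ℝ => ((t, x') : ℝ × ℝ)) ((1 : ℝ), (0 : ℝ)) x :=
    (hasDerivAt_id x).prodMk (hasDerivAt_const x x')
  exact h1.comp_hasDerivAt x h2

lemma fderiv2 (hH : ContDiff ℝ 2 (Function.uncurry H)) (x x' : ℝ) :
    HasDerivAt (fun t => H x t) (fderiv ℝ (Function.uncurry H) (x, x') (0, 1)) x' := by
  have h1 : HasFDerivAt (Function.uncurry H) (fderiv ℝ (Function.uncurry H) (x, x')) (x, x') :=
    ((hH.differentiable (by norm_num)) (x, x')).hasFDerivAt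
  have h2 : HasDerivAt (fun t : ℝ => ((x, t) : ℝ × ℝ)) ((0 : ℝ), (1 : ℝ)) x' :=
    (hasDerivAt_const x' x).prodMk (hasDerivAt_id x')
  exact h1.comp_hasDerivAt x' h2

lemma hasDerivAt_D1 (hH : ContDiff ℝ 2 (Function.uncurry H)) (x x' : ℝ) :
    HasDerivAt (fun t => H t x') (D1 H x x') x :=
  (fderiv1 hH x x').differentiableAt.hasDerivAt

lemma hasDerivAt_D2 (hH : ContDiff ℝ 2 (Function.uncurry H)) (x x' : ℝ) :
    HasDerivAt (fun t => H x t) (D2 H x x') x' :=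
  (fderiv2 hH x x').differentiableAt.hasDerivAt

lemma D1_eq (hH : ContDiff ℝ 2 (Function.uncurry H)) (x x' : ℝ) :
    D1 H x x' = fderiv ℝ (Function.uncurry H) (x, x') (1, 0) := (fderiv1 hH x x').deriv

lemma D2_eq (hH : ContDiff ℝ 2 (Function.uncurry H)) (x x' : ℝ) :
    D2 H x x' = fderiv ℝ (Function.uncurry H) (x, x') (0, 1) := (fderiv2 hH x x').deriv

lemma contDiff_D1 (hH : ContDiff ℝ 2 (Function.uncurry H)) :
    ContDiff ℝ 1 (fun p : ℝ × ℝ => D1 H p.1 p.2) := by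
  have : (fun p : ℝ × ℝ => D1 H p.1 p.2)
      = fun p : ℝ × ℝ => fderiv ℝ (Function.uncurry H) p ((1 : ℝ), (0 : ℝ)) :=
    funext fun p => D1_eq hH p.1 p.2
  rw [this]
  exact (hH.fderiv_right (by norm_num)).clm_apply contDiff_const

lemma contDiff_D2 (hH : ContDiff ℝ 2 (Function.uncurry H)) :
    ContDiff ℝ 1 (fun p : ℝ × ℝ => D2 H p.1 p.2) := by
  have : (fun p : ℝ × ℝ => D2 H p.1 p.2)
      = fun p : ℝ × ℝ => fderiv ℝ (Function.uncurry H) p ((0 : ℝ), (1 : ℝ)) :=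
    funext fun p => D2_eq hH p.1 p.2
  rw [this]
  exact (hH.fderiv_right (by norm_num)).clm_apply contDiff_const

lemma hasDerivAt_D12 (hH : ContDiff ℝ 2 (Function.uncurry H)) (x x' : ℝ) :
    HasDerivAt (fun t => D1 H x t) (D12 H x x') x' := by
  have : Differentiable ℝ (fun t : ℝ => D1 H x t) := by
    have h := (contDiff_D1 hH).differentiable (by norm_num)
    exact h.comp ((differentiable_const x).prodMk differentiable_id)
  exact (this x').hasDerivAt

lemma hasDerivAt_D11 (hH : ContDiff ℝ 2 (Function.uncurry H)) (x x' : ℝ) :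
    HasDerivAt (fun t => D1 H t x') (D11 H x x') x := by
  have : Differentiable ℝ (fun t : ℝ => D1 H t x') := by
    have h := (contDiff_D1 hH).differentiable (by norm_num)
    exact h.comp (differentiable_id.prodMk (differentiable_const x'))
  exact (this x).hasDerivAt

lemma hasDerivAt_D21 (hH : ContDiff ℝ 2 (Function.uncurry H)) (x x' : ℝ) :
    HasDerivAt (fun t => D2 H t x') (D21 H x x') x := by
  have : Differentiable ℝ (fun t : ℝ => D2 H t x') := by
    have h := (contDiff_D2 hH).differentiable (by norm_num)
    exact h.comp (differentiable_id.prodMk (differentiable_const x'))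
  exact (this x).hasDerivAt

lemma lip_of_deriv_bound {f f' : ℝ → ℝ} {C : ℝ} (hf : ∀ t, HasDerivAt f (f' t) t)
    (hb : ∀ t, |f' t| ≤ C) (a b : ℝ) : |f b - f a| ≤ C * |b - a| := by
  have := Convex.norm_image_sub_le_of_norm_hasDerivWithin_le (s := Set.univ) (f := f) (f' := f')
    (fun x _ => (hf x).hasDerivWithinAt) (fun x _ => hb x) convex_univ (Set.mem_univ a)
    (Set.mem_univ b)
  simpa [Real.norm_eq_abs] using this

lemma decr_of_deriv_le {f f' : ℝ → ℝ} {ρ : ℝ} (hf : ∀ t, HasDerivAt f (f' t) t)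
    (hb : ∀ t, f' t ≤ -ρ) {a b : ℝ} (hab : a ≤ b) : f b ≤ f a - ρ * (b - a) := by
  have key : ∀ t, HasDerivAt (fun s => f s + ρ * s) (f' t + ρ) t := fun t => by
    exact ((hf t).add ((hasDerivAt_id' t).const_mul ρ)).congr_deriv (by ring)
  have hanti : Antitone (fun s => f s + ρ * s) := by
    apply antitone_of_deriv_nonpos
    · exact fun t => (key t).differentiableAt
    · intro t; rw [(key t).deriv]; linarith [hb t]
  have := hanti hab
  simp only at this
  linarith

end Aux

/-- If the graph `{(x, c + u'(x))}` of a `C¹` periodic `u` is invariant under the twist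
map `F`, then `u` is a weak KAM solution: there is `α ∈ ℝ` with
`T_c u(x) := inf_y (u(y) + H(y, x) - c(x - y)) = u(x) - α` for all `x`. -/
theorem stmt13 (H : ℝ → ℝ → ℝ) (ρ M : ℝ) (F : ℝ × ℝ → ℝ × ℝ)
    (hH : ContDiff ℝ 2 (Function.uncurry H))
    (hper : ∀ x x', H (x + 1) (x' + 1) = H x x')
    (hρ : 0 < ρ) (htwist : ∀ x x', D12 H x x' ≤ -ρ)
    (hM : 0 < M)
    (hbound : ∀ x x', |D11 H x x'| ≤ M ∧ |D12 H x x'| ≤ M ∧ |D21 H x x'| ≤ M ∧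
      |D22 H x x'| ≤ M)
    (hFbij : Function.Bijective F)
    (hFdef : ∀ x r x' r', F (x, r) = (x', r') ↔ (r = -D1 H x x' ∧ r' = D2 H x x'))
    (u : ℝ → ℝ) (hu : ContDiff ℝ 1 u) (huper : ∀ x, u (x + 1) = u x) (c : ℝ)
    (hinv : Set.BijOn F {p : ℝ × ℝ | p.2 = c + deriv u p.1}
      {p : ℝ × ℝ | p.2 = c + deriv u p.1}) :
    ∃ α : ℝ, ∀ x : ℝ, (⨅ y : ℝ, (u y + H y x - c * (x - y))) = u x - α := by
  classical
  have hud : Differentiable ℝ u := hu.differentiable (by norm_num)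
  have hucont : Continuous (deriv u) := hu.continuous_deriv le_rfl
  -- strict decrease of D1 in the second variable
  have hD1dec : ∀ y, ∀ {a b : ℝ}, a ≤ b → D1 H y b ≤ D1 H y a - ρ * (b - a) := by
    intro y a b hab
    exact decr_of_deriv_le (hasDerivAt_D12 hH y) (htwist y) hab
  have hD1inj : ∀ y, Function.Injective (D1 H y) := by
    intro y a b hab
    by_contra hne
    rcases lt_or_gt_of_ne hne with hlt | hlt
    · have := hD1dec y hlt.le; nlinarith
    · have := hD1dec y hlt.le; nlinarith
  -- Lipschitz bounds in the first variable
  have hD1lip : ∀ z a b : ℝ, |D1 H b z - D1 H a z| ≤ M * |b - a| := fun z a b =>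
    lip_of_deriv_bound (fun t => hasDerivAt_D11 hH t z) (fun t => (hbound t z).1) a b
  have hD2lip : ∀ z a b : ℝ, |D2 H b z - D2 H a z| ≤ M * |b - a| := fun z a b =>
    lip_of_deriv_bound (fun t => hasDerivAt_D21 hH t z) (fun t => (hbound t z).2.2.1) a b
  -- membership in the graph
  have hmem : ∀ y : ℝ, (y, c + deriv u y) ∈ {p : ℝ × ℝ | p.2 = c + deriv u p.1} := fun y => rfl
  -- forward graph map g
  set g : ℝ → ℝ := fun y => (F (y, c + deriv u y)).1 with hgdef
  have hg1 : ∀ y, c + deriv u y = -D1 H y (g y) := by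
    intro y
    exact ((hFdef y (c + deriv u y) (g y) (F (y, c + deriv u y)).2).mp rfl).1
  have hgsnd : ∀ y, (F (y, c + deriv u y)).2 = D2 H y (g y) := by
    intro y
    exact ((hFdef y (c + deriv u y) (g y) (F (y, c + deriv u y)).2).mp rfl).2
  have hg2 : ∀ y, c + deriv u (g y) = D2 H y (g y) := by
    intro y
    have hm := hinv.mapsTo (hmem y)
    have : (F (y, c + deriv u y)).2 = c + deriv u (g y) := hm
    rw [← this, hgsnd y]
  have hFval : ∀ y, F (y, c + deriv u y) = (g y, c + deriv u (g y)) := by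
    intro y
    have hm := hinv.mapsTo (hmem y)
    exact Prod.ext rfl hm
  -- inverse graph map h
  have hsurj : ∀ x : ℝ, ∃ y : ℝ, F (y, c + deriv u y) = (x, c + deriv u x) := by
    intro x
    obtain ⟨p, hp, hfp⟩ := hinv.surjOn (hmem x)
    refine ⟨p.1, ?_⟩
    have hp2 : p.2 = c + deriv u p.1 := hp
    have : p = (p.1, c + deriv u p.1) := Prod.ext rfl hp2
    rw [← this]; exact hfp
  choose h hh using hsurj
  have hh1 : ∀ x, c + deriv u (h x) = -D1 H (h x) x := fun x => ((hFdef _ _ _ _).mp (hh x)).1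
  have hh2 : ∀ x, c + deriv u x = D2 H (h x) x := fun x => ((hFdef _ _ _ _).mp (hh x)).2
  have hgh : ∀ x, g (h x) = x := fun x => congrArg Prod.fst (hh x)
  -- g is injective
  have hginj : Function.Injective g := by
    intro a b hab
    have h1 : F (a, c + deriv u a) = F (b, c + deriv u b) := by
      rw [hFval a, hFval b, hab]
    have := hFbij.1 h1
    exact (Prod.ext_iff.mp this).1
  -- g is continuous
  have hgkey : ∀ y y' : ℝ, ρ * |g y - g y'| ≤
      |(c + deriv u y) - (c + deriv u y')| + M * |y - y'| := by
    intro y y'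
    have habs : ρ * |g y - g y'| ≤ |D1 H y (g y) - D1 H y (g y')| := by
      rcases le_total (g y) (g y') with hle | hle
      · have hd := hD1dec y hle
        have hnn : (0:ℝ) ≤ g y' - g y := sub_nonneg.mpr hle
        have hprod : 0 ≤ ρ * (g y' - g y) := mul_nonneg hρ.le hnn
        rw [abs_sub_comm (g y) (g y'), abs_of_nonneg hnn,
          abs_of_nonneg (by linarith : (0:ℝ) ≤ D1 H y (g y) - D1 H y (g y'))]
        linarith
      · have hd := hD1dec y hle
        have hnn : (0:ℝ) ≤ g y - g y' := sub_nonneg.mpr hle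
        have hprod : 0 ≤ ρ * (g y - g y') := mul_nonneg hρ.le hnn
        rw [abs_of_nonneg hnn, abs_sub_comm,
          abs_of_nonneg (by linarith : (0:ℝ) ≤ D1 H y (g y') - D1 H y (g y))]
        linarith
    have h1 : D1 H y (g y) = -(c + deriv u y) := by rw [hg1 y]; ring
    have h2 : D1 H y' (g y') = -(c + deriv u y') := by rw [hg1 y']; ring
    calc ρ * |g y - g y'| ≤ |D1 H y (g y) - D1 H y (g y')| := habs
      _ ≤ |D1 H y (g y) - D1 H y' (g y')| + |D1 H y' (g y') - D1 H y (g y')| := by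
          have := abs_sub_le (D1 H y (g y)) (D1 H y' (g y')) (D1 H y (g y'))
          linarith [this]
      _ ≤ |(c + deriv u y) - (c + deriv u y')| + M * |y - y'| := by
          have e1 : |D1 H y (g y) - D1 H y' (g y')| = |(c + deriv u y) - (c + deriv u y')| := by
            rw [h1, h2, show -(c + deriv u y) - -(c + deriv u y')
              = -((c + deriv u y) - (c + deriv u y')) from by ring, abs_neg]
          have e2 := hD1lip (g y') y y'
          rw [abs_sub_comm y' y] at e2
          rw [e1]; linarith
  have hgcont : Continuous g := by
    rw [continuous_iff_continuousAt]
    intro y₀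
    rw [Metric.continuousAt_iff]
    intro ε hε
    have hGc : ContinuousAt (fun y => c + deriv u y) y₀ :=
      (continuous_const.add hucont).continuousAt
    rw [Metric.continuousAt_iff] at hGc
    obtain ⟨δ₁, hδ₁, hδ₁'⟩ := hGc (ρ * ε / 2) (by positivity)
    refine ⟨min δ₁ (ρ * ε / (2 * M)), lt_min hδ₁ (by positivity), ?_⟩
    intro y hy
    have hy1 : dist y y₀ < δ₁ := lt_of_lt_of_le hy (min_le_left _ _)
    have hy2 : dist y y₀ < ρ * ε / (2 * M) := lt_of_lt_of_le hy (min_le_right _ _)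
    have hb := hgkey y y₀
    rw [Real.dist_eq] at *
    have hG := hδ₁' hy1
    rw [Real.dist_eq] at hG
    have : ρ * |g y - g y₀| < ρ * ε / 2 + M * (ρ * ε / (2 * M)) := by
      have hMy : M * |y - y₀| < M * (ρ * ε / (2 * M)) := by
        apply mul_lt_mul_of_pos_left hy2 hM
      calc ρ * |g y - g y₀| ≤ |(c + deriv u y) - (c + deriv u y₀)| + M * |y - y₀| := hb
        _ < ρ * ε / 2 + M * (ρ * ε / (2 * M)) := by
            linarith [hG]
    have hMne : (M : ℝ) ≠ 0 := ne_of_gt hM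
    have : ρ * |g y - g y₀| < ρ * ε := by
      have : M * (ρ * ε / (2 * M)) = ρ * ε / 2 := by field_simp
      linarith [this ▸ ‹ρ * |g y - g y₀| < ρ * ε / 2 + M * (ρ * ε / (2 * M))›]
    have := (mul_lt_mul_iff_right₀ hρ).mp this
    exact this
  -- periodicity
  have hduper : ∀ y : ℝ, deriv u (y + 1) = deriv u y := by
    intro y
    have hinner : HasDerivAt (fun t : ℝ => t + 1) 1 y := by
      simpa using (hasDerivAt_id y).add_const 1
    have hc : HasDerivAt (fun t : ℝ => u (t + 1)) (deriv u (y + 1)) y := by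
      exact ((hud (y + 1)).hasDerivAt.comp y hinner).congr_deriv (by ring)
    have he : (fun t : ℝ => u (t + 1)) = u := funext huper
    rw [he] at hc
    exact (hc.deriv).symm
  have hD1per : ∀ y z : ℝ, D1 H (y + 1) (z + 1) = D1 H y z := by
    intro y z
    have e : (fun t : ℝ => H t (z + 1)) = fun t : ℝ => H (t - 1) z := by
      funext t
      have := hper (t - 1) z
      rw [show t - 1 + 1 = t from by ring] at this
      rw [this]
    have hcomp : HasDerivAt (fun t : ℝ => H (t - 1) z) (D1 H y z) (y + 1) := by
      have hinner : HasDerivAt (fun t : ℝ => t - 1) 1 (y + 1) := by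
        simpa using (hasDerivAt_id (y + 1)).sub_const 1
      have houter : HasDerivAt (fun s : ℝ => H s z) (D1 H y z) (y + 1 - 1) := by
        rw [show y + 1 - 1 = y from by ring]; exact hasDerivAt_D1 hH y z
      exact (houter.comp (y + 1) hinner).congr_deriv (by ring)
    have : HasDerivAt (fun t : ℝ => H t (z + 1)) (D1 H y z) (y + 1) := by
      rw [e]; exact hcomp
    have := this.deriv
    simpa [D1] using this
  have hgper : ∀ y : ℝ, g (y + 1) = g y + 1 := by
    intro y
    apply hD1inj (y + 1)
    have e1 : D1 H (y + 1) (g (y + 1)) = -(c + deriv u (y + 1)) := by rw [hg1 (y + 1)]; ring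
    have e2 : D1 H (y + 1) (g y + 1) = D1 H y (g y) := hD1per y (g y)
    have e3 : D1 H y (g y) = -(c + deriv u y) := by rw [hg1 y]; ring
    rw [e1, e2, e3, hduper y]
  -- strict monotonicity of g and h
  have hgmono : StrictMono g := by
    rcases Continuous.strictMono_of_inj hgcont hginj with hmono | hanti
    · exact hmono
    · exfalso
      have h1 : g 1 < g 0 := hanti (zero_lt_one)
      have h2 : g (0 + 1) = g 0 + 1 := hgper 0
      rw [zero_add] at h2
      linarith
  have hhmono : StrictMono h := by
    intro a b hab
    have : g (h a) < g (h b) := by rw [hgh a, hgh b]; exact hab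
    exact hgmono.lt_iff_lt.mp this
  -- the minimization property
  set v : ℝ → ℝ := fun x => u (h x) + H (h x) x - c * (x - h x) with hvdef
  have hmin : ∀ x y : ℝ, v x ≤ u y + H y x - c * (x - y) := by
    intro x y
    have hfd : ∀ t : ℝ, HasDerivAt (fun s => u s + H s x - c * (x - s))
        (deriv u t + D1 H t x + c) t := by
      intro t
      have h1 : HasDerivAt u (deriv u t) t := (hud t).hasDerivAt
      have h2 := hasDerivAt_D1 hH t x
      have h3 : HasDerivAt (fun s : ℝ => c * (x - s)) (c * (0 - 1)) t :=
        ((hasDerivAt_const t x).sub (hasDerivAt_id t)).const_mul c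
      have := (h1.add h2).sub h3
      exact this.congr_deriv (by ring)
    have hsign_pos : ∀ t, h x < t → 0 < deriv u t + D1 H t x + c := by
      intro t ht
      have hgt : x < g t := by
        have := hgmono ht
        rwa [hgh x] at this
      have hd := hD1dec t hgt.le
      have hGt : c + deriv u t = -D1 H t (g t) := hg1 t
      nlinarith [mul_pos hρ (sub_pos.mpr hgt)]
    have hsign_neg : ∀ t, t < h x → deriv u t + D1 H t x + c < 0 := by
      intro t ht
      have hlt : g t < x := by
        have := hgmono ht
        rwa [hgh x] at this
      have hd := hD1dec t hlt.le
      have hGt : c + deriv u t = -D1 H t (g t) := hg1 t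
      nlinarith [mul_pos hρ (sub_pos.mpr hlt)]
    have hHc1 : Continuous (fun s : ℝ => H s x) :=
      hH.continuous.comp (continuous_id.prodMk continuous_const)
    have hcont : Continuous (fun s : ℝ => u s + H s x - c * (x - s)) :=
      (hu.continuous.add hHc1).sub (continuous_const.mul (continuous_const.sub continuous_id))
    have hderiv : ∀ t, deriv (fun s => u s + H s x - c * (x - s)) t
        = deriv u t + D1 H t x + c := fun t => (hfd t).deriv
    have hmono2 : StrictMonoOn (fun s => u s + H s x - c * (x - s)) (Set.Ici (h x)) := by
      apply strictMonoOn_of_deriv_pos (convex_Ici (h x)) hcont.continuousOn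
      intro t ht
      rw [interior_Ici] at ht
      rw [hderiv]
      exact hsign_pos t ht
    have hanti2 : StrictAntiOn (fun s => u s + H s x - c * (x - s)) (Set.Iic (h x)) := by
      apply strictAntiOn_of_deriv_neg (convex_Iic (h x)) hcont.continuousOn
      intro t ht
      rw [interior_Iic] at ht
      rw [hderiv]
      exact hsign_neg t ht
    rcases lt_trichotomy y (h x) with hy | hy | hy
    · have := hanti2 (Set.mem_Iic.mpr hy.le) (Set.mem_Iic.mpr le_rfl) hy
      exact this.le
    · rw [hy]
    · have := hmono2 (Set.mem_Ici.mpr le_rfl) (Set.mem_Ici.mpr hy.le) hy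
      exact this.le
  have hiInf : ∀ x : ℝ, (⨅ y : ℝ, (u y + H y x - c * (x - y))) = v x := by
    intro x
    have hbdd : BddBelow (Set.range fun y => u y + H y x - c * (x - y)) := by
      refine ⟨v x, ?_⟩
      rintro z ⟨y, rfl⟩
      exact hmin x y
    apply le_antisymm
    · have := ciInf_le hbdd (h x)
      exact this
    · exact le_ciInf (hmin x)
  -- two-point estimate
  have hD2cont : ∀ y : ℝ, Continuous (fun s => D2 H y s) := fun y =>
    (contDiff_D2 hH).continuous.comp (continuous_const.prodMk continuous_id)
  have hhmono' : Monotone h := hhmono.monotone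
  have key : ∀ a b : ℝ, a ≤ b → |(v b - u b) - (v a - u a)| ≤ M * (h b - h a) * (b - a) := by
    intro a b hab
    have hy12 : h a ≤ h b := hhmono' hab
    have ineq1 : v b - v a ≤ H (h a) b - H (h a) a - c * (b - a) := by
      have h1 := hmin b (h a)
      have h2 : v a = u (h a) + H (h a) a - c * (a - h a) := rfl
      linarith
    have ineq2 : H (h b) b - H (h b) a - c * (b - a) ≤ v b - v a := by
      have h1 := hmin a (h b)
      have h2 : v b = u (h b) + H (h b) b - c * (b - h b) := rfl
      linarith
    have hu_eq : (∫ s in a..b, deriv u s) = u b - u a := by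
      apply intervalIntegral.integral_deriv_eq_sub (fun t _ => hud t)
      exact hucont.intervalIntegrable a b
    have hH_eq : ∀ y : ℝ, (∫ s in a..b, D2 H y s) = H y b - H y a := fun y =>
      intervalIntegral.integral_eq_sub_of_hasDerivAt (fun t _ => hasDerivAt_D2 hH y t)
        ((hD2cont y).intervalIntegrable a b)
    have hpt1 : ∀ s ∈ Set.Icc a b, D2 H (h a) s - deriv u s - c ≤ M * (h b - h a) := by
      intro s hs
      have h1 : deriv u s + c = D2 H (h s) s := by linarith [hh2 s]
      have h2 := hD2lip s (h s) (h a)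
      have h3 : h a ≤ h s := hhmono' hs.1
      have h4 : h s ≤ h b := hhmono' hs.2
      have h5 : |h a - h s| = h s - h a := by
        rw [abs_sub_comm, abs_of_nonneg (by linarith)]
      rw [h5] at h2
      have h6 : D2 H (h a) s - D2 H (h s) s ≤ M * (h s - h a) :=
        le_trans (le_abs_self _) h2
      have h7 : M * (h s - h a) ≤ M * (h b - h a) :=
        mul_le_mul_of_nonneg_left (by linarith) hM.le
      linarith
    have hpt2 : ∀ s ∈ Set.Icc a b, -(M * (h b - h a)) ≤ D2 H (h b) s - deriv u s - c := by
      intro s hs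
      have h1 : deriv u s + c = D2 H (h s) s := by linarith [hh2 s]
      have h2 := hD2lip s (h b) (h s)
      have h3 : h a ≤ h s := hhmono' hs.1
      have h4 : h s ≤ h b := hhmono' hs.2
      have h5 : |h s - h b| = h b - h s := by
        rw [abs_sub_comm, abs_of_nonneg (by linarith)]
      rw [h5] at h2
      have h6 : D2 H (h s) s - D2 H (h b) s ≤ M * (h b - h s) :=
        le_trans (le_abs_self _) h2
      have h7 : M * (h b - h s) ≤ M * (h b - h a) :=
        mul_le_mul_of_nonneg_left (by linarith) hM.le
      linarith
    have hint1 : IntervalIntegrable (fun s => D2 H (h a) s - deriv u s - c)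
        MeasureTheory.volume a b :=
      (((hD2cont (h a)).sub hucont).sub continuous_const).intervalIntegrable a b
    have hint2 : IntervalIntegrable (fun s => D2 H (h b) s - deriv u s - c)
        MeasureTheory.volume a b :=
      (((hD2cont (h b)).sub hucont).sub continuous_const).intervalIntegrable a b
    have hsplit : ∀ y : ℝ, (∫ s in a..b, (D2 H y s - deriv u s - c))
        = (H y b - H y a) - (u b - u a) - c * (b - a) := by
      intro y
      rw [intervalIntegral.integral_sub (f := fun s => D2 H y s - deriv u s) (((hD2cont y).sub hucont).intervalIntegrable a b)
        intervalIntegrable_const, intervalIntegral.integral_sub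
        ((hD2cont y).intervalIntegrable a b) (hucont.intervalIntegrable a b),
        hH_eq y, hu_eq, intervalIntegral.integral_const, smul_eq_mul]
      ring
    have hub : (∫ s in a..b, (D2 H (h a) s - deriv u s - c)) ≤ (b - a) * (M * (h b - h a)) := by
      have := intervalIntegral.integral_mono_on hab hint1 intervalIntegrable_const hpt1
      rwa [intervalIntegral.integral_const, smul_eq_mul] at this
    have hlb : (b - a) * (-(M * (h b - h a))) ≤ ∫ s in a..b, (D2 H (h b) s - deriv u s - c) := by
      have := intervalIntegral.integral_mono_on hab intervalIntegrable_const hint2 hpt2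
      rwa [intervalIntegral.integral_const, smul_eq_mul] at this
    rw [hsplit (h a)] at hub
    rw [hsplit (h b)] at hlb
    have e : (b - a) * (M * (h b - h a)) = M * (h b - h a) * (b - a) := by ring
    have e' : (b - a) * (-(M * (h b - h a))) = -(M * (h b - h a) * (b - a)) := by ring
    rw [abs_le]
    constructor
    · rw [e'] at hlb; linarith
    · rw [e] at hub; linarith
  -- telescoping: v - u is constant
  have hWkey : ∀ a b : ℝ, a ≤ b → v b - u b = v a - u a := by
    intro a b hab
    have hstep : ∀ n : ℕ, 0 < n →
        |(v b - u b) - (v a - u a)| ≤ M * (h b - h a) * (b - a) / n := by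
      intro n hn
      have hn' : (0:ℝ) < n := Nat.cast_pos.mpr hn
      set t : ℕ → ℝ := fun k => a + k * ((b - a) / n) with htdef
      have ht0 : t 0 = a := by simp [htdef]
      have htn : t n = b := by
        simp only [htdef]
        field_simp
        ring
      have htstep : ∀ k : ℕ, t (k + 1) - t k = (b - a) / n := by
        intro k; simp only [htdef]; push_cast; ring
      have htle : ∀ k : ℕ, t k ≤ t (k + 1) := by
        intro k
        have h0 : 0 ≤ (b - a) / (n:ℝ) := div_nonneg (by linarith) hn'.le
        simp only [htdef]
        push_cast
        nlinarith [h0]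
      have tele : (v b - u b) - (v a - u a)
          = ∑ k ∈ Finset.range n, ((v (t (k+1)) - u (t (k+1))) - (v (t k) - u (t k))) := by
        rw [Finset.sum_range_sub (fun k => v (t k) - u (t k)) n, ht0, htn]
      have hterm : ∀ k ∈ Finset.range n,
          |(v (t (k+1)) - u (t (k+1))) - (v (t k) - u (t k))|
            ≤ (h (t (k+1)) - h (t k)) * (M * ((b - a) / n)) := by
        intro k _
        have hk := key (t k) (t (k+1)) (htle k)
        rw [htstep k] at hk
        calc |(v (t (k+1)) - u (t (k+1))) - (v (t k) - u (t k))|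
            ≤ M * (h (t (k+1)) - h (t k)) * ((b - a) / n) := hk
          _ = (h (t (k+1)) - h (t k)) * (M * ((b - a) / n)) := by ring
      calc |(v b - u b) - (v a - u a)|
          = |∑ k ∈ Finset.range n, ((v (t (k+1)) - u (t (k+1))) - (v (t k) - u (t k)))| := by
            rw [tele]
        _ ≤ ∑ k ∈ Finset.range n, |(v (t (k+1)) - u (t (k+1))) - (v (t k) - u (t k))| :=
            Finset.abs_sum_le_sum_abs _ _
        _ ≤ ∑ k ∈ Finset.range n, (h (t (k+1)) - h (t k)) * (M * ((b - a) / n)) :=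
            Finset.sum_le_sum hterm
        _ = (h b - h a) * (M * ((b - a) / n)) := by
            rw [← Finset.sum_mul, Finset.sum_range_sub (fun k => h (t k)) n, ht0, htn]
        _ = M * (h b - h a) * (b - a) / n := by ring
    have habs : |(v b - u b) - (v a - u a)| ≤ 0 := by
      by_contra hpos
      push_neg at hpos
      obtain ⟨n₀, hn₀⟩ :=
        exists_nat_gt (M * (h b - h a) * (b - a) / |(v b - u b) - (v a - u a)|)
      have h1 := hstep (n₀ + 1) (Nat.succ_pos n₀)
      have hn1 : (0:ℝ) < (n₀:ℝ) + 1 := by positivity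
      have h2 : M * (h b - h a) * (b - a) < |(v b - u b) - (v a - u a)| * ((n₀:ℝ) + 1) := by
        have hq : M * (h b - h a) * (b - a) / |(v b - u b) - (v a - u a)| < (n₀:ℝ) + 1 := by
          calc M * (h b - h a) * (b - a) / |(v b - u b) - (v a - u a)| < (n₀:ℝ) := hn₀
            _ < (n₀:ℝ) + 1 := by linarith
        have := (div_lt_iff₀ hpos).mp hq
        linarith
      have h3 : M * (h b - h a) * (b - a) / ((n₀:ℝ) + 1)
          < |(v b - u b) - (v a - u a)| := by
        rw [div_lt_iff₀ hn1]
        linarith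
      rw [show ((((n₀ + 1) : ℕ)):ℝ) = (n₀:ℝ) + 1 from by push_cast; ring] at h1
      linarith
    have := abs_nonpos_iff.mp habs
    linarith
  refine ⟨u 0 - v 0, fun x => ?_⟩
  rw [hiInf x]
  have hx0 : v x - u x = v 0 - u 0 := by
    rcases le_total x 0 with hx | hx
    · exact (hWkey x 0 hx).symm
    · exact hWkey 0 x hx
  linarith
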